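/- The inverse quaternionic Cayley transform maps the Siegel domain boundary into the punctured unit sphere: if (q',p') ∈ ℍⁿ × ℍ satisfies Re p' = |q'|², then 1 + p' ≠ 0 (indeed Re(1+p') ≥ 1), the identity 4|q'|² + |1−p'|² = |1+p'|² holds, and the point (q,p) with qᵃ = 2(1+p')⁻¹·q'ᵃ and p = (1−p')(1+p')⁻¹ satisfies |q|² + |p|² = 1 and p ≠ −1. -/

import Mathlib

open scoped Quaternion

noncomputable section

/-- `|q|² = Σ |qᵃ|²` for `q ∈ ℍⁿ`. -/
def qnormSq {n : ℕ} (q : Fin n → ℍ[ℝ]) : ℝ := ∑ a, Quaternion.normSq (q a)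

lemma qnormSq_nonneg {n : ℕ} (q : Fin n → ℍ[ℝ]) : 0 ≤ qnormSq q :=
  Finset.sum_nonneg fun a _ => Quaternion.normSq_nonneg

/-- the inverse quaternionic Cayley transform maps the Siegel domain
boundary into the punctured unit sphere: if `(q',p') ∈ ℍⁿ × ℍ` satisfies
`Re p' = |q'|²`, then `1 + p' ≠ 0` (indeed `Re(1+p') ≥ 1`), the identity
`4|q'|² + |1−p'|² = |1+p'|²` holds, and the point `(q,p)` with `qᵃ = 2(1+p')⁻¹·q'ᵃ`
and `p = (1−p')(1+p')⁻¹` satisfies `|q|² + |p|² = 1` and `p ≠ −1`. -/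
theorem cayley_siegel_to_sphere (n : ℕ) (q' : Fin n → ℍ[ℝ]) (p' : ℍ[ℝ])
    (hSigma : p'.re = qnormSq q') :
    1 + p' ≠ 0 ∧ (1 : ℝ) ≤ (1 + p').re ∧
    4 * qnormSq q' + Quaternion.normSq (1 - p') = Quaternion.normSq (1 + p') ∧
    qnormSq (fun a => 2 * (1 + p')⁻¹ * q' a)
      + Quaternion.normSq ((1 - p') * (1 + p')⁻¹) = 1 ∧
    (1 - p') * (1 + p')⁻¹ ≠ -1 := by
  have hre : (1 : ℝ) ≤ (1 + p').re := by
    simp only [Quaternion.re_add, Quaternion.re_one, hSigma]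
    linarith [qnormSq_nonneg q']
  have hne : 1 + p' ≠ 0 := by
    intro h
    have := congrArg QuaternionAlgebra.re h
    simp only [Quaternion.re_zero] at this
    linarith
  have hnsq : 4 * qnormSq q' + Quaternion.normSq (1 - p')
      = Quaternion.normSq (1 + p') := by
    simp only [Quaternion.normSq_def', Quaternion.re_add, Quaternion.imI_add,
      Quaternion.imJ_add, Quaternion.imK_add, Quaternion.re_sub, Quaternion.imI_sub,
      Quaternion.imJ_sub, Quaternion.imK_sub, Quaternion.re_one, Quaternion.imI_one,
      Quaternion.imJ_one, Quaternion.imK_one, ← hSigma]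
    ring
  have hnz : Quaternion.normSq (1 + p') ≠ 0 := by
    simpa using hne
  have hinv : Quaternion.normSq ((1 + p')⁻¹) = (Quaternion.normSq (1 + p'))⁻¹ :=
    map_inv₀ Quaternion.normSq _
  have h2four : Quaternion.normSq (2 : ℍ[ℝ]) = 4 := by
    have : (2 : ℍ[ℝ]) = ((2 : ℝ) : ℍ[ℝ]) := by
      rw [show ((2:ℝ):ℍ[ℝ]) = ((2:ℕ):ℍ[ℝ]) by norm_cast, Nat.cast_ofNat]
    rw [this, Quaternion.normSq_coe]; norm_num
  refine ⟨hne, hre, hnsq, ?_, ?_⟩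
  · have : qnormSq (fun a => 2 * (1 + p')⁻¹ * q' a)
        = 4 * (Quaternion.normSq (1 + p'))⁻¹ * qnormSq q' := by
      unfold qnormSq
      rw [Finset.mul_sum]
      refine Finset.sum_congr rfl fun a _ => ?_
      rw [map_mul, map_mul, hinv, h2four]
    rw [this, map_mul, hinv]
    field_simp
    linarith [hnsq]
  · intro h
    have h2 : (1 - p') = -1 * (1 + p') := by
      have := congrArg (· * (1 + p')) h
      simpa [mul_assoc, inv_mul_cancel₀ hne] using this
    have h3 : (1 : ℍ[ℝ]) - p' = -(1 + p') := by rw [h2, neg_one_mul]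
    have := congrArg QuaternionAlgebra.re h3
    simp only [Quaternion.re_sub, Quaternion.re_neg, Quaternion.re_add,
      Quaternion.re_one] at this
    linarith
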